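/- For any partition λ, the misère Grundy value of λ under RIT equals the misère Grundy value of the Nim position rem(λ). -/

import Mathlib

/-- The `j`-th part (0-indexed) of a partition given as a list, `0` beyond the end. -/
def part (l : List ℕ) (j : ℕ) : ℕ := l.getD j 0

/-- A partition: a nonincreasing list of positive integers. -/
def IsPartition (l : List ℕ) : Prop :=
  l.Chain' (· ≥ ·) ∧ ∀ x ∈ l, 0 < x

/-- RIT move: replace the part at (0-indexed) position `i` by a smaller value `v`,
keeping the sequence nonincreasing, then drop the (trailing) zeros. -/
def RitMove (l l' : List ℕ) : Prop :=
  ∃ i v, i < l.length ∧ v < part l i ∧ (l.set i v).Chain' (· ≥ ·) ∧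
    l' = (l.set i v).filter (fun x => x ≠ 0)

/-- RIT move on an odd-numbered row (1-indexed), i.e. an even 0-indexed position. -/
def RitMoveOdd (l l' : List ℕ) : Prop :=
  ∃ i v, i < l.length ∧ i % 2 = 0 ∧ v < part l i ∧ (l.set i v).Chain' (· ≥ ·) ∧
    l' = (l.set i v).filter (fun x => x ≠ 0)

/-- RIT move on an even-numbered row (1-indexed), i.e. an odd 0-indexed position. -/
def RitMoveEven (l l' : List ℕ) : Prop :=
  ∃ i v, i < l.length ∧ i % 2 = 1 ∧ v < part l i ∧ (l.set i v).Chain' (· ≥ ·) ∧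
    l' = (l.set i v).filter (fun x => x ≠ 0)

/-- `core λ = (λ₂, λ₂, λ₄, λ₄, …)` (1-indexed parts), as a `0`-padded sequence. -/
def core (l : List ℕ) : ℕ → ℕ := fun j => part l (2 * (j / 2) + 1)

/-- `rem λ = (λ₁ - λ₂, λ₃ - λ₄, …)` (1-indexed parts), as a `0`-padded sequence. -/
def rem (l : List ℕ) : ℕ → ℕ := fun i => part l (2 * i) - part l (2 * i + 1)

/-- A Nim move strictly decreases exactly one coordinate. -/
def NimMove (p q : ℕ → ℕ) : Prop := ∃ i, q i < p i ∧ ∀ j, j ≠ i → q j = p j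

/-- The nim-sum (bitwise XOR) of the remnant of `l`:
`(λ₁ - λ₂) ⊕ (λ₃ - λ₄) ⊕ ⋯ ⊕ (λ_{2⌈r/2⌉-1} - λ_{2⌈r/2⌉})`. -/
def nimSum (l : List ℕ) : ℕ :=
  (List.ofFn (fun i : Fin ((l.length + 1) / 2) => rem l i)).foldr (· ^^^ ·) 0

/-- The minimal excludant of a set of naturals. -/
noncomputable def mexOf (S : Set ℕ) : ℕ := sInf {n | n ∉ S}

/-- `G` is the (normal play) Sprague-Grundy function of RIT. -/
def IsRitGrundy (G : List ℕ → ℕ) : Prop :=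
  ∀ l, IsPartition l → G l = mexOf {n | ∃ l', RitMove l l' ∧ G l' = n}

/-- `G` is the misère Grundy function of RIT (value `1` at the terminal position). -/
def IsRitMisereGrundy (G : List ℕ → ℕ) : Prop :=
  G [] = 1 ∧ ∀ l, IsPartition l → l ≠ [] →
    G l = mexOf {n | ∃ l', RitMove l l' ∧ G l' = n}

/-- `G` is the misère Grundy function of Nim on `0`-padded sequences of heaps. -/
def IsNimMisereGrundy (G : (ℕ → ℕ) → ℕ) : Prop :=
  (∀ p : ℕ → ℕ, (∀ i, p i = 0) → G p = 1) ∧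
  (∀ p : ℕ → ℕ, (Function.support p).Finite → (∃ i, p i ≠ 0) →
    G p = mexOf {n | ∃ q, NimMove p q ∧ G q = n})

/-- `P` is the set of P-positions of RIT under normal play. -/
def IsRitP (P : List ℕ → Prop) : Prop :=
  ∀ l, IsPartition l → (P l ↔ ∀ l', RitMove l l' → ¬ P l')


theorem part_set (l : List ℕ) (i j v : ℕ) :
    part (l.set i v) j = if j = i ∧ i < l.length then v else part l j := by
  unfold part
  by_cases h : i = j
  · subst h
    simp only [List.getD, List.getElem?_set, if_pos rfl]
    by_cases h2 : i < l.length
    · simp [h2]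
    · simp [h2]
  · rw [if_neg (fun hh => h hh.1.symm)]
    simp [List.getD, List.getElem?_set, h]

theorem part_eq_getElem (l : List ℕ) (j : ℕ) (h : j < l.length) : part l j = l[j] :=
  List.getD_eq_getElem l 0 h

theorem part_eq_zero (l : List ℕ) (j : ℕ) (h : l.length ≤ j) : part l j = 0 := by
  unfold part
  simp [List.getD, List.getElem?_eq_none h]

theorem part_anti {l : List ℕ} (h : l.Chain' (· ≥ ·)) {j k : ℕ} (hjk : j ≤ k) :
    part l k ≤ part l j := by
  by_cases hk : k < l.length
  · have hj : j < l.length := lt_of_le_of_lt hjk hk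
    rw [part_eq_getElem l k hk, part_eq_getElem l j hj]
    rcases eq_or_lt_of_le hjk with rfl | hlt
    · exact le_refl _
    · exact (List.isChain_iff_pairwise.mp h |> List.pairwise_iff_getElem.mp) j k hj hk hlt
  · rw [part_eq_zero l k (not_lt.mp hk)]; exact Nat.zero_le _

def xorTo (p : ℕ → ℕ) : ℕ → ℕ
  | 0 => 0
  | n+1 => xorTo p n ^^^ p n

theorem xorTo_congr {p q : ℕ → ℕ} (N : ℕ) (h : ∀ k < N, p k = q k) :
    xorTo p N = xorTo q N := by
  induction N with
  | zero => rfl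
  | succ n ih =>
    simp only [xorTo, ih (fun k hk => h k (Nat.lt_succ_of_lt hk)), h n (Nat.lt_succ_self n)]

theorem xorTo_stable {p : ℕ → ℕ} {N : ℕ} (h : ∀ k, N ≤ k → p k = 0) :
    ∀ M, N ≤ M → xorTo p M = xorTo p N := by
  intro M
  induction M with
  | zero => intro hM; rw [Nat.le_zero.mp hM]
  | succ n ih =>
    intro hM
    rcases Nat.lt_or_ge N (n+1) with h1 | h1
    · have hn : N ≤ n := Nat.lt_succ_iff.mp h1
      simp only [xorTo, ih hn, h n hn, Nat.xor_zero]
    · have : N = n + 1 := le_antisymm hM h1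
      rw [this]

theorem xor_ac (a b c : ℕ) : a ^^^ b ^^^ c = a ^^^ c ^^^ b := by
  rw [Nat.xor_assoc, Nat.xor_comm b c, ← Nat.xor_assoc]

theorem xorTo_update {p q : ℕ → ℕ} {i : ℕ} (N : ℕ) (hi : i < N)
    (h : ∀ j, j ≠ i → q j = p j) : xorTo q N = xorTo p N ^^^ p i ^^^ q i := by
  induction N with
  | zero => omega
  | succ n ih =>
    rcases Nat.lt_or_ge i n with h1 | h1
    · simp only [xorTo, ih h1, h n (Nat.ne_of_gt h1)]
      rw [xor_ac (xorTo p n ^^^ p i) (q i) (p n), xor_ac (xorTo p n) (p i) (p n)]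
    · have hin : i = n := by omega
      subst hin
      simp only [xorTo]
      rw [xorTo_congr i (fun k hk => h k (Nat.ne_of_lt hk))]
      rw [Nat.xor_assoc (xorTo p i) (p i) (p i), Nat.xor_self, Nat.xor_zero]

theorem xorTo_le_one {p : ℕ → ℕ} (N : ℕ) (h : ∀ k, p k ≤ 1) : xorTo p N ≤ 1 := by
  induction N with
  | zero => exact Nat.zero_le _
  | succ n ih =>
    simp only [xorTo]
    interval_cases hh : (xorTo p n) <;> [skip; skip] <;>
      (have := h n; interval_cases hp : (p n) <;> simp)

theorem exists_nim_move {p : ℕ → ℕ} :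
    ∀ N, ∀ m, m < xorTo p N → ∃ j < N, m ^^^ xorTo p N ^^^ p j < p j := by
  intro N
  induction N with
  | zero => intro m h; simp [xorTo] at h
  | succ n ih =>
    intro m h
    simp only [xorTo] at h ⊢
    rcases Nat.lt_xor_cases h with h1 | h1
    · obtain ⟨j, hj, hlt⟩ := ih (m ^^^ p n) h1
      refine ⟨j, Nat.lt_succ_of_lt hj, ?_⟩
      have e : m ^^^ (xorTo p n ^^^ p n) ^^^ p j = m ^^^ p n ^^^ xorTo p n ^^^ p j := by
        rw [← Nat.xor_assoc m (xorTo p n) (p n), xor_ac m (xorTo p n) (p n)]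
      rw [e]; exact hlt
    · refine ⟨n, Nat.lt_succ_self n, ?_⟩
      have e : m ^^^ (xorTo p n ^^^ p n) ^^^ p n = m ^^^ xorTo p n := by
        rw [Nat.xor_assoc m, Nat.xor_assoc (xorTo p n), Nat.xor_self, Nat.xor_zero]
      rw [e]; exact h1

def BddSupp (p : ℕ → ℕ) : Prop := ∃ N, ∀ k, N ≤ k → p k = 0

open Classical in
noncomputable def F (p : ℕ → ℕ) : ℕ :=
  if h : BddSupp p then
    (if ∀ i, p i ≤ 1 then xorTo p h.choose ^^^ 1 else xorTo p h.choose)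
  else 0

open Classical in
theorem F_spec {p : ℕ → ℕ} {N : ℕ} (hN : ∀ k, N ≤ k → p k = 0) :
    F p = if ∀ i, p i ≤ 1 then xorTo p N ^^^ 1 else xorTo p N := by
  have h : BddSupp p := ⟨N, hN⟩
  have hc := h.choose_spec
  have hx : xorTo p h.choose = xorTo p N := by
    rw [← xorTo_stable hc (max N h.choose) (le_max_right _ _),
        xorTo_stable hN (max N h.choose) (le_max_left _ _)]
  rw [F, dif_pos h, hx]


theorem mexOf_eq {S : Set ℕ} {g : ℕ} (h1 : g ∉ S) (h2 : ∀ m < g, m ∈ S) : mexOf S = g := by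
  unfold mexOf
  refine le_antisymm (Nat.sInf_le h1) (le_csInf ⟨g, h1⟩ ?_)
  intro n hn
  by_contra hlt
  exact hn (h2 n (not_le.mp hlt))

theorem xor_le_one {a b : ℕ} (ha : a ≤ 1) (hb : b ≤ 1) : a ^^^ b ≤ 1 := by
  interval_cases a <;> interval_cases b <;> decide

theorem xor_left_cancel {X a b : ℕ} (h : X ^^^ a = X ^^^ b) : a = b := by
  have := congrArg (fun z => X ^^^ z) h
  simpa [← Nat.xor_assoc, Nat.xor_self, Nat.zero_xor] using this

theorem F_ne {p q : ℕ → ℕ} {N i : ℕ} (hp : ∀ k, N ≤ k → p k = 0) (hq : ∀ k, N ≤ k → q k = 0)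
    (hne : q i ≠ p i) (hoff : ∀ j, j ≠ i → q j = p j) : F q ≠ F p := by
  have hiN : i < N := by
    by_contra h
    exact hne (by rw [hq i (not_lt.mp h), hp i (not_lt.mp h)])
  have hx : xorTo q N = xorTo p N ^^^ (p i ^^^ q i) :=
    (xorTo_update N hiN hoff).trans (Nat.xor_assoc _ _ _)
  have hxne : xorTo q N ≠ xorTo p N := by
    rw [hx]
    intro hcon
    have h0 : p i ^^^ q i = 0 := xor_left_cancel (X := xorTo p N)
      (by rw [hcon, Nat.xor_zero])
    exact hne (Nat.xor_eq_zero_iff.mp h0).symm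
  rw [F_spec hp, F_spec hq]
  by_cases hq1 : ∀ j, q j ≤ 1 <;> by_cases hp1 : ∀ j, p j ≤ 1
  · rw [if_pos hq1, if_pos hp1]
    intro hcon
    exact hxne (by
      have := congrArg (fun z => z ^^^ 1) hcon
      simpa [xor_cancel_right] using this)
  · rw [if_pos hq1, if_neg hp1]
    push_neg at hp1
    obtain ⟨j, hj⟩ := hp1
    have hji : j = i := by
      by_contra hji
      have h2 : p j ≤ 1 := by rw [← hoff j hji]; exact hq1 j
      omega
    subst hji
    intro hcon
    rw [hx, Nat.xor_assoc] at hcon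
    have h0 : p j ^^^ q j ^^^ 1 = 0 := xor_left_cancel (X := xorTo p N)
      (by rw [hcon, Nat.xor_zero])
    have h1 : p j = q j ^^^ 1 := by
      rw [Nat.xor_assoc] at h0
      exact Nat.xor_eq_zero_iff.mp h0
    have : p j ≤ 1 := h1 ▸ xor_le_one (hq1 j) (le_refl 1)
    omega
  · rw [if_neg hq1, if_pos hp1]
    push_neg at hq1
    obtain ⟨j, hj⟩ := hq1
    have hji : j = i := by
      by_contra hji
      have h2 : q j ≤ 1 := by rw [hoff j hji]; exact hp1 j
      omega
    subst hji
    intro hcon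
    rw [hx] at hcon
    have h1 : p j ^^^ q j = 1 := xor_left_cancel (X := xorTo p N) hcon
    have : q j = p j ^^^ 1 := by
      have := congrArg (fun z => p j ^^^ z) h1
      simpa [← Nat.xor_assoc, Nat.xor_self, Nat.zero_xor] using this
    have : q j ≤ 1 := this ▸ xor_le_one (hp1 j) (le_refl 1)
    omega
  · rw [if_neg hq1, if_neg hp1]; exact hxne


theorem xor_helper (a b m : ℕ) : a ^^^ b ^^^ (m ^^^ a ^^^ b) = m := by
  rw [Nat.xor_comm m a, xor_ac a m b, ← Nat.xor_assoc (a ^^^ b) (a ^^^ b) m,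
    Nat.xor_self, Nat.zero_xor]

theorem update_bound {p : ℕ → ℕ} {N i t : ℕ} (hN : ∀ k, N ≤ k → p k = 0) (hi : i < N) :
    ∀ k, N ≤ k → Function.update p i t k = 0 := by
  intro k hk
  rw [Function.update_of_ne (by omega)]
  exact hN k hk

theorem nim_complete {p : ℕ → ℕ} {N : ℕ} (hN : ∀ k, N ≤ k → p k = 0)
    (hne : ∃ i, p i ≠ 0) {m : ℕ} (hm : m < F p) :
    ∃ q, NimMove p q ∧ F q = m := by
  by_cases hp1 : ∀ j, p j ≤ 1
  · rw [F_spec hN, if_pos hp1] at hm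
    have hX : xorTo p N ≤ 1 := xorTo_le_one N hp1
    obtain ⟨i0, hi0⟩ := hne
    have hi1 : p i0 = 1 := by have := hp1 i0; omega
    have hi0N : i0 < N := by by_contra h; exact hi0 (hN i0 (not_lt.mp h))
    have hX0 : xorTo p N = 0 := by
      rcases Nat.lt_or_ge (xorTo p N) 1 with h | h
      · omega
      · exfalso
        have hx1 : xorTo p N = 1 := le_antisymm hX h
        rw [hx1] at hm
        simp [Nat.xor_self] at hm
    have hm0 : m = 0 := by rw [hX0, Nat.zero_xor] at hm; omega
    refine ⟨Function.update p i0 0, ⟨i0, by simp [hi1], fun j hj => Function.update_of_ne hj _ _⟩, ?_⟩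
    have hqN := update_bound (t := 0) hN hi0N
    rw [F_spec hqN, if_pos (fun j => ?_), xorTo_update N hi0N (fun j hj => Function.update_of_ne hj _ _)]
    · simp [hX0, hi1, hm0]
    · by_cases hji : j = i0
      · subst hji; simp
      · rw [Function.update_of_ne hji]; exact hp1 j
  · rw [F_spec hN, if_neg hp1] at hm
    obtain ⟨j, hjN, hjt⟩ := exists_nim_move N m hm
    set t := m ^^^ xorTo p N ^^^ p j with ht
    have hxq : ∀ t', xorTo (Function.update p j t') N = xorTo p N ^^^ p j ^^^ t' := by
      intro t'
      rw [xorTo_update N hjN (fun k hk => Function.update_of_ne hk _ _)]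
      simp
    by_cases hq1 : ∀ i1, Function.update p j t i1 ≤ 1
    · -- flip last bit
      push_neg at hp1
      obtain ⟨j2, hj2⟩ := hp1
      have hj2j : j2 = j := by
        by_contra hne2
        have := hq1 j2
        rw [Function.update_of_ne hne2] at this
        omega
      subst hj2j
      have htle : t ≤ 1 := by have := hq1 j2; simpa using this
      have ht'le : t ^^^ 1 ≤ 1 := xor_le_one htle (le_refl 1)
      refine ⟨Function.update p j2 (t ^^^ 1), ⟨j2, by simp; omega, fun k hk => Function.update_of_ne hk _ _⟩, ?_⟩
      have hqN := update_bound (t := t ^^^ 1) hN hjN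
      rw [F_spec hqN, if_pos (fun k => ?_), hxq (t ^^^ 1)]
      · rw [← Nat.xor_assoc (xorTo p N ^^^ p j2) t 1, xor_helper, xor_cancel_right]
      · by_cases hkj : k = j2
        · subst hkj; simpa using ht'le
        · rw [Function.update_of_ne hkj]
          have := hq1 k
          rwa [Function.update_of_ne hkj] at this
    · refine ⟨Function.update p j t, ⟨j, by simpa using hjt, fun k hk => Function.update_of_ne hk _ _⟩, ?_⟩
      have hqN := update_bound (t := t) hN hjN
      rw [F_spec hqN, if_neg hq1, hxq t, ht, xor_helper]

theorem nim_move_bound {p q : ℕ → ℕ} {N : ℕ} (hN : ∀ k, N ≤ k → p k = 0)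
    (h : NimMove p q) : (∃ i, i < N ∧ q i < p i ∧ (∀ j, j ≠ i → q j = p j)) ∧
      (∀ k, N ≤ k → q k = 0) := by
  obtain ⟨i, hi, hoff⟩ := h
  have hiN : i < N := by
    by_contra hc
    rw [hN i (not_lt.mp hc)] at hi
    omega
  refine ⟨⟨i, hiN, hi, hoff⟩, fun k hk => ?_⟩
  rw [hoff k (by omega), hN k hk]

theorem nim_F_mex {p : ℕ → ℕ} {N : ℕ} (hN : ∀ k, N ≤ k → p k = 0) (hne : ∃ i, p i ≠ 0) :
    mexOf {n | ∃ q, NimMove p q ∧ F q = n} = F p := by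
  refine mexOf_eq ?_ ?_
  · rintro ⟨q, hmv, hFq⟩
    obtain ⟨⟨i, hiN, hlt, hoff⟩, hqN⟩ := nim_move_bound hN hmv
    exact F_ne hN hqN (Nat.ne_of_lt hlt) hoff hFq
  · intro m hm
    obtain ⟨q, hmv, hFq⟩ := nim_complete hN hne hm
    exact ⟨q, hmv, hFq⟩


theorem F_zero {p : ℕ → ℕ} (h : ∀ i, p i = 0) : F p = 1 := by
  rw [F_spec (N := 0) (fun k _ => h k), if_pos (fun i => by rw [h i]; omega)]
  show (0 : ℕ) ^^^ 1 = 1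
  rw [Nat.zero_xor]

theorem Gn_eq_F {Gn : (ℕ → ℕ) → ℕ} (hGn : IsNimMisereGrundy Gn) :
    ∀ n N p, (∀ k, N ≤ k → p k = 0) → (∑ k ∈ Finset.range N, p k) ≤ n → Gn p = F p := by
  intro n
  induction n using Nat.strong_induction_on with
  | _ n ih =>
    intro N p hN hsum
    by_cases hz : ∀ i, p i = 0
    · rw [hGn.1 p hz, F_zero hz]
    · push_neg at hz
      have hfin : (Function.support p).Finite := by
        apply Set.Finite.subset (Finset.range N).finite_toSet
        intro x hx
        simp only [Finset.coe_range, Set.mem_Iio]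
        by_contra hc
        exact hx (hN x (not_lt.mp hc))
      rw [hGn.2 p hfin hz]
      have hset : {n | ∃ q, NimMove p q ∧ Gn q = n} = {n | ∃ q, NimMove p q ∧ F q = n} := by
        ext v
        have key : ∀ q, NimMove p q → Gn q = F q := by
          intro q hmv
          obtain ⟨⟨i, hiN, hlt, hoff⟩, hqN⟩ := nim_move_bound hN hmv
          have hlt' : (∑ k ∈ Finset.range N, q k) < ∑ k ∈ Finset.range N, p k := by
            apply Finset.sum_lt_sum
            · intro k _
              by_cases hk : k = i
              · subst hk; exact le_of_lt hlt
              · rw [hoff k hk]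
            · exact ⟨i, Finset.mem_range.mpr hiN, hlt⟩
          have hn1 : 1 ≤ n := by
            have : 0 < ∑ k ∈ Finset.range N, p k := lt_of_le_of_lt (Nat.zero_le _) hlt'
            omega
          exact ih (n - 1) (by omega) N q hqN (by omega)
        constructor
        · rintro ⟨q, hmv, hGq⟩; exact ⟨q, hmv, (key q hmv).symm.trans hGq⟩
        · rintro ⟨q, hmv, hFq⟩; exact ⟨q, hmv, (key q hmv).trans hFq⟩
      rw [hset, nim_F_mex hN hz]




theorem rem_bound (m : List ℕ) : ∀ k, m.length ≤ k → rem m k = 0 := by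
  intro k hk
  unfold rem
  rw [part_eq_zero m (2*k) (by omega)]
  exact Nat.zero_sub _

theorem chain'_of_set {l : List ℕ} {i v : ℕ} (h : l.Chain' (· ≥ ·)) (hi : i < l.length)
    (hv1 : v ≤ part l i) (hv2 : part l (i+1) ≤ v) : (l.set i v).Chain' (· ≥ ·) := by
  have hg := List.isChain_iff_getElem.mp h
  refine List.isChain_iff_getElem.mpr ?_
  intro j hj
  simp only [List.length_set] at hj
  simp only [List.get_eq_getElem, List.getElem_set]
  have hj1 : j + 1 < l.length := by omega
  by_cases h1 : i = j
  · subst h1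
    rw [if_pos rfl, if_neg (by omega)]
    rw [← part_eq_getElem l (i+1) hj1]
    exact hv2
  · rw [if_neg h1]
    by_cases h2 : i = j + 1
    · rw [if_pos h2]
      rw [← part_eq_getElem l j (by omega)]
      calc v ≤ part l i := hv1
        _ ≤ part l j := part_anti h (by omega)
    · rw [if_neg h2]
      have := hg j hj
      simpa using this

theorem part_pos {l : List ℕ} (hpos : ∀ x ∈ l, 0 < x) {j : ℕ} (hj : j < l.length) :
    0 < part l j := by
  rw [part_eq_getElem l j hj]
  exact hpos _ (List.getElem_mem hj)

theorem filter_set_eq {l : List ℕ} {i v : ℕ} (hpos : ∀ x ∈ l, 0 < x)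
    (hv : v ≠ 0) :
    (l.set i v).filter (fun x => x ≠ 0) = l.set i v := by
  rw [List.filter_eq_self]
  intro a ha
  rcases List.mem_or_eq_of_mem_set ha with h | h
  · have := hpos a h; simp; omega
  · subst h; simp [hv]

theorem set_zero_last {l : List ℕ} {i : ℕ} (hpos : ∀ x ∈ l, 0 < x) (hi : i < l.length)
    (hch : (l.set i 0).Chain' (· ≥ ·)) : i = l.length - 1 := by
  by_contra hc
  have hi1 : i + 1 < l.length := by omega
  have h1 : part (l.set i 0) (i+1) ≤ part (l.set i 0) i := part_anti hch (by omega)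
  rw [part_set l i (i+1) 0, if_neg (by omega), part_set l i i 0, if_pos ⟨rfl, hi⟩] at h1
  have := part_pos hpos hi1
  omega

theorem part_filter {l : List ℕ} {i v : ℕ} (hpos : ∀ x ∈ l, 0 < x) (hi : i < l.length)
    (hch : (l.set i v).Chain' (· ≥ ·)) (j : ℕ) :
    part ((l.set i v).filter (fun x => x ≠ 0)) j = part (l.set i v) j := by
  by_cases hv : v = 0
  · subst hv
    have hlast : i = l.length - 1 := set_zero_last hpos hi hch
    have hfil : (l.set i 0).filter (fun x => x ≠ 0) = l.take i := by
      rw [List.set_eq_take_append_cons_drop, if_pos hi, List.filter_append]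
      have hdrop : l.drop (i+1) = [] := List.drop_eq_nil_of_le (by omega)
      rw [hdrop]
      have htake : (l.take i).filter (fun x => x ≠ 0) = l.take i := by
        rw [List.filter_eq_self]
        intro a ha
        have := hpos a (List.mem_of_mem_take ha)
        simp; omega
      rw [htake]
      simp
    rw [hfil]
    by_cases hji : j < i
    · rw [part_set l i j 0, if_neg (fun hcon => absurd hcon.1 (by omega)),
         part_eq_getElem (l.take i) j (by rw [List.length_take]; omega),
         part_eq_getElem l j (by omega)]
      simp [List.getElem_take]
    · rw [part_eq_zero (l.take i) j (by rw [List.length_take]; omega)]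
      by_cases hji2 : j = i
      · subst hji2; rw [part_set l j j 0, if_pos ⟨rfl, hi⟩]
      · rw [part_set l i j 0, if_neg (fun hcon => absurd hcon.1 hji2),
          part_eq_zero l j (by omega)]
  · rw [filter_set_eq hpos hv]

theorem rem_rit {l l' : List ℕ} (hpos : ∀ x ∈ l, 0 < x) (hch : l.Chain' (· ≥ ·)) (hmv : RitMove l l') :
    ∃ k0, rem l' k0 ≠ rem l k0 ∧ ∀ k, k ≠ k0 → rem l' k = rem l k := by
  obtain ⟨i, v, hi, hv, hch', rfl⟩ := hmv
  have hpf := part_filter hpos hi hch'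
  have hvge : part l (i+1) ≤ v := by
    have h2 := part_anti hch' (Nat.le_succ i)
    rwa [part_set l i (i+1) v, if_neg (fun hc => by omega),
      part_set l i i v, if_pos ⟨rfl, hi⟩] at h2
  refine ⟨i / 2, ?_, ?_⟩
  · unfold rem
    rw [hpf, hpf]
    rcases Nat.even_or_odd i with ⟨t, heven⟩ | ⟨t, hodd⟩
    · have h2t : 2 * (i/2) = i := by omega
      rw [h2t, part_set l i i v, if_pos ⟨rfl, hi⟩,
        part_set l i (i+1) v, if_neg (fun hc => by omega)]
      have : v - part l (i+1) < part l i - part l (i+1) :=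
        Nat.sub_lt_sub_right hvge hv
      omega
    · have h2t : 2 * (i/2) = i - 1 := by omega
      have h2t1 : 2 * (i/2) + 1 = i := by omega
      rw [h2t]
      have he : i - 1 + 1 = i := by omega
      rw [he, part_set l i i v, if_pos ⟨rfl, hi⟩,
        part_set l i (i-1) v, if_neg (fun hc => by omega)]
      have hle : part l i ≤ part l (i-1) := part_anti hch (by omega)
      have : part l (i-1) - part l i < part l (i-1) - v :=
        Nat.sub_lt_sub_left (lt_of_lt_of_le hv hle) hv
      omega
  · intro k hk
    unfold rem
    rw [hpf, hpf, part_set l i (2*k) v, if_neg (fun hc => by omega),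
      part_set l i (2*k+1) v, if_neg (fun hc => by omega)]

theorem rit_partition {l l' : List ℕ} (hmv : RitMove l l') : IsPartition l' := by
  obtain ⟨i, v, hi, hv, hch', rfl⟩ := hmv
  constructor
  · exact hch'.sublist List.filter_sublist
  · intro x hx
    rw [List.mem_filter] at hx
    have := hx.2
    simp at this
    omega

theorem sum_filter_ne_zero (m : List ℕ) : (m.filter (fun x => x ≠ 0)).sum = m.sum := by
  induction m with
  | nil => rfl
  | cons a t ih =>
    by_cases ha : a = 0
    · subst ha
      simp only [List.filter_cons, decide_not, ne_eq, List.sum_cons]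
      simpa using ih
    · simp only [List.filter_cons, decide_not, ne_eq, List.sum_cons]
      simp only [ha, decide_false, Bool.not_false, if_true, List.sum_cons]
      simp only [decide_not] at ih ⊢
      omega

theorem rit_sum_lt {l l' : List ℕ} (hmv : RitMove l l') : l'.sum < l.sum := by
  obtain ⟨i, v, hi, hv, hch', rfl⟩ := hmv
  rw [sum_filter_ne_zero, List.sum_set, if_pos hi]
  conv_rhs => rw [← List.take_append_drop i l]
  rw [List.sum_append]
  have hdrop : l.drop i = l[i] :: l.drop (i+1) := (List.getElem_cons_drop hi).symm
  rw [hdrop, List.sum_cons]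
  have hvi : v < l[i] := by rwa [part_eq_getElem l i hi] at hv
  omega

theorem nim_to_rit {l : List ℕ} (hch : l.Chain' (· ≥ ·)) (hpos : ∀ x ∈ l, 0 < x)
    {q : ℕ → ℕ} (hmv : NimMove (rem l) q) : ∃ l', RitMove l l' ∧ rem l' = q := by
  obtain ⟨k, hk, hoff⟩ := hmv
  have hrk : 0 < rem l k := lt_of_le_of_lt (Nat.zero_le _) hk
  have h2k : 2*k < l.length := by
    by_contra hc
    have : rem l k = 0 := by
      unfold rem; rw [part_eq_zero l (2*k) (by omega)]; exact Nat.zero_sub _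
    omega
  have hremk : rem l k = part l (2*k) - part l (2*k+1) := rfl
  have hvlt : part l (2*k+1) + q k < part l (2*k) := by omega
  have hch' : (l.set (2*k) (part l (2*k+1) + q k)).Chain' (· ≥ ·) :=
    chain'_of_set hch h2k (le_of_lt hvlt) (by omega)
  refine ⟨_, ⟨2*k, part l (2*k+1) + q k, h2k, hvlt, hch', rfl⟩, ?_⟩
  funext k'
  have hpf := part_filter hpos h2k hch'
  by_cases hkk : k' = k
  · subst hkk
    show part _ (2*k') - part _ (2*k'+1) = q k'
    rw [hpf, hpf, part_set l (2*k') (2*k') _, if_pos ⟨rfl, h2k⟩,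
      part_set l (2*k') (2*k'+1) _, if_neg (fun hc => by omega)]
    omega
  · show part _ (2*k') - part _ (2*k'+1) = q k'
    rw [hpf, hpf, part_set l (2*k) (2*k') _, if_neg (fun hc => by omega),
      part_set l (2*k) (2*k'+1) _, if_neg (fun hc => by omega)]
    exact (hoff k' hkk).symm

theorem rit_special {l : List ℕ} (hch : l.Chain' (· ≥ ·)) (hpos : ∀ x ∈ l, 0 < x)
    (hne : l ≠ []) (hz : ∀ k, rem l k = 0) :
    ∃ l', RitMove l l' ∧ F (rem l') = 0 := by
  have hlen : 0 < l.length := List.length_pos_iff.mpr hne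
  have hodd : l.length % 2 = 0 := by
    by_contra hc
    have h1 : 2 * ((l.length - 1)/2) = l.length - 1 := by omega
    have h2 := hz ((l.length - 1)/2)
    unfold rem at h2
    rw [h1, part_eq_zero l (l.length - 1 + 1) (by omega)] at h2
    have := part_pos hpos (show l.length - 1 < l.length by omega)
    omega
  have hi : l.length - 1 < l.length := by omega
  have hpi : 0 < part l (l.length - 1) := part_pos hpos hi
  have hvlt : part l (l.length - 1) - 1 < part l (l.length - 1) := by omega
  have hch' : (l.set (l.length - 1) (part l (l.length - 1) - 1)).Chain' (· ≥ ·) :=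
    chain'_of_set hch hi (by omega)
      (by rw [part_eq_zero l (l.length - 1 + 1) (by omega)]; omega)
  refine ⟨_, ⟨l.length - 1, part l (l.length - 1) - 1, hi, hvlt, hch', rfl⟩, ?_⟩
  have hpf := part_filter hpos hi hch'
  have hio : (l.length - 1) % 2 = 1 := by omega
  have h2m : 2 * ((l.length - 1) / 2) = l.length - 1 - 1 := by omega
  have h2m1 : 2 * ((l.length - 1) / 2) + 1 = l.length - 1 := by omega
  have hrem : ∀ k, rem ((l.set (l.length - 1) (part l (l.length - 1) - 1)).filter
      (fun x => x ≠ 0)) k = if k = (l.length - 1) / 2 then 1 else 0 := by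
    intro k
    by_cases hkm : k = (l.length - 1) / 2
    · subst hkm
      rw [if_pos rfl]
      show part _ (2 * ((l.length - 1) / 2)) - part _ (2 * ((l.length - 1) / 2) + 1) = 1
      rw [hpf, hpf, h2m1, h2m, part_set l (l.length - 1) (l.length - 1) _,
        if_pos ⟨rfl, hi⟩, part_set l (l.length - 1) (l.length - 1 - 1) _,
        if_neg (fun hc => by omega)]
      have hza := hz ((l.length - 1) / 2)
      unfold rem at hza
      rw [h2m1, h2m] at hza
      have hge : part l (l.length - 1) ≤ part l (l.length - 1 - 1) := part_anti hch (by omega)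
      omega
    · rw [if_neg hkm]
      show part _ (2 * k) - part _ (2 * k + 1) = 0
      rw [hpf, hpf, part_set l (l.length - 1) (2*k) _, if_neg (fun hc => by omega),
        part_set l (l.length - 1) (2*k+1) _, if_neg (fun hc => by omega)]
      exact hz k
  have hqN : ∀ k, l.length ≤ k → rem ((l.set (l.length - 1) (part l (l.length - 1) - 1)).filter
      (fun x => x ≠ 0)) k = 0 := by
    intro k hk
    rw [hrem k, if_neg (fun hc => by omega)]
  rw [F_spec hqN, if_pos (fun k => by rw [hrem k]; split <;> omega)]
  have hx0 : xorTo (rem l) l.length = 0 := by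
    rw [xorTo_stable (N := 0) (fun k _ => hz k) l.length (Nat.zero_le _)]
    rfl
  have hupd : xorTo (rem ((l.set (l.length - 1) (part l (l.length - 1) - 1)).filter
      (fun x => x ≠ 0))) l.length = 1 := by
    rw [xorTo_update (p := rem l) (i := (l.length - 1) / 2) l.length (by omega)
      (fun j hj => by rw [hrem j, if_neg hj]; exact (hz j).symm)]
    rw [hx0, hz, hrem, if_pos rfl]
    rfl
  rw [hupd]
  rfl


theorem rem_nil : ∀ k, rem [] k = 0 := by
  intro k
  show part [] _ - part [] _ = 0
  simp [part]

theorem Gr_eq_F {Gr : List ℕ → ℕ} (hGr : IsRitMisereGrundy Gr) :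
    ∀ n l, IsPartition l → l.sum ≤ n → Gr l = F (rem l) := by
  intro n
  induction n using Nat.strong_induction_on with
  | _ n ih =>
    intro l hl hsum
    by_cases hnil : l = []
    · subst hnil
      rw [hGr.1, F_zero rem_nil]
    · rw [hGr.2 l hl hnil]
      have hpos1 : 0 < l.sum := by
        rcases l with _ | ⟨a, t⟩
        · exact absurd rfl hnil
        · have := hl.2 a List.mem_cons_self
          simp [List.sum_cons]
          omega
      have key : ∀ l', RitMove l l' → Gr l' = F (rem l') := by
        intro l' hmv
        have hlt := rit_sum_lt hmv
        exact ih (n-1) (by omega) l' (rit_partition hmv) (by omega)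
      have hset : {m | ∃ l', RitMove l l' ∧ Gr l' = m}
          = {m | ∃ l', RitMove l l' ∧ F (rem l') = m} := by
        ext m
        constructor
        · rintro ⟨l', hmv, h⟩; exact ⟨l', hmv, (key l' hmv).symm.trans h⟩
        · rintro ⟨l', hmv, h⟩; exact ⟨l', hmv, (key l' hmv).trans h⟩
      rw [hset]
      apply mexOf_eq
      · rintro ⟨l', hmv, hF⟩
        obtain ⟨k0, hk0, hoff⟩ := rem_rit hl.2 hl.1 hmv
        have hlen' : l'.length ≤ l.length := by
          obtain ⟨i, v, hi, hv, hch', rfl⟩ := hmv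
          calc ((l.set i v).filter (fun x => x ≠ 0)).length
              ≤ (l.set i v).length := List.length_filter_le _ _
            _ = l.length := List.length_set
        have hb' : ∀ k, l.length ≤ k → rem l' k = 0 :=
          fun k hk => rem_bound l' k (le_trans hlen' hk)
        exact absurd hF (F_ne (rem_bound l) hb' hk0 hoff)
      · intro m hm
        by_cases hz : ∀ k, rem l k = 0
        · rw [F_zero hz] at hm
          have hm0 : m = 0 := by omega
          obtain ⟨l', hmv, hF0⟩ := rit_special hl.1 hl.2 hnil hz
          exact ⟨l', hmv, by rw [hF0, hm0]⟩
        · push_neg at hz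
          obtain ⟨q, hq, hFq⟩ := nim_complete (rem_bound l) hz hm
          obtain ⟨l', hmv, hrq⟩ := nim_to_rit hl.1 hl.2 hq
          exact ⟨l', hmv, by rw [hrq, hFq]⟩


/-- the misère Grundy value of `λ` under RIT equals the misère Grundy
value of the Nim position `rem λ`. -/
theorem stmt_8 (Gr : List ℕ → ℕ) (Gn : (ℕ → ℕ) → ℕ)
    (hGr : IsRitMisereGrundy Gr) (hGn : IsNimMisereGrundy Gn)
    (l : List ℕ) (hl : IsPartition l) : Gr l = Gn (rem l) := by
  rw [Gr_eq_F hGr l.sum l hl (le_refl _),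
    Gn_eq_F hGn (∑ k ∈ Finset.range l.length, rem l k) l.length (rem l)
      (rem_bound l) (le_refl _)]
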